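/- If the potential outcome Y_a is conditionally independent of the data-source indicator R given the full covariates (X, W), then E[Y_a | R = false] = Σ_{(x,w)} ℙ(X = x, W = w | R = false) · E[Y_a | X = x, W = w, R = true], where the sum runs over all (x, w) with ℙ(X = x, W = w, R = false) > 0. -/

import Mathlib

open Finset

attribute [local instance] Classical.propDecidable

variable {Ω : Type*}

/-- Probability of an event. -/
noncomputable def pr [Fintype Ω] (P : Ω → ℝ) (E : Ω → Prop) : ℝ :=
  ∑ ω, if E ω then P ω else 0

/-- Expectation of a real random variable. -/
noncomputable def ex [Fintype Ω] (P : Ω → ℝ) (Z : Ω → ℝ) : ℝ :=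
  ∑ ω, P ω * Z ω

/-- Conditional probability ℙ(F | E) = ℙ(F ∩ E)/ℙ(E). -/
noncomputable def cpr [Fintype Ω] (P : Ω → ℝ) (F E : Ω → Prop) : ℝ :=
  pr P (fun ω => F ω ∧ E ω) / pr P E

/-- Conditional expectation E[Z | E] = E[Z·1_E]/ℙ(E). -/
noncomputable def cex [Fintype Ω] (P : Ω → ℝ) (Z : Ω → ℝ) (E : Ω → Prop) : ℝ :=
  (∑ ω, if E ω then P ω * Z ω else 0) / pr P E

lemma pr_nonneg [Fintype Ω] (P : Ω → ℝ) (hP0 : ∀ ω, 0 ≤ P ω) (E : Ω → Prop) :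
    0 ≤ pr P E :=
  Finset.sum_nonneg fun ω _ => by split <;> simp [hP0 ω]

lemma pr_congr [Fintype Ω] (P : Ω → ℝ) {E F : Ω → Prop} (h : ∀ ω, E ω ↔ F ω) :
    pr P E = pr P F :=
  Finset.sum_congr rfl fun ω _ => by rw [iff_iff_eq.mp (h ω)]

lemma pr_mono [Fintype Ω] (P : Ω → ℝ) (hP0 : ∀ ω, 0 ≤ P ω) {E F : Ω → Prop}
    (h : ∀ ω, E ω → F ω) : pr P E ≤ pr P F := by
  refine Finset.sum_le_sum fun ω _ => ?_
  by_cases hE : E ω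
  · simp [hE, h ω hE]
  · simp only [hE, if_false]
    split <;> simp [hP0 ω]

lemma pr_zero_imp [Fintype Ω] (P : Ω → ℝ) (hP0 : ∀ ω, 0 ≤ P ω) {E : Ω → Prop}
    (h : pr P E = 0) : ∀ ω, E ω → P ω = 0 := by
  intro ω hω
  have := (Finset.sum_eq_zero_iff_of_nonneg
    (fun ω _ => by split <;> simp [hP0 ω])).mp h ω (Finset.mem_univ ω)
  simpa [hω] using this

lemma num_eq [Fintype Ω] (P : Ω → ℝ) (Ya : Ω → ℝ) (E : Ω → Prop) :
    (∑ ω, if E ω then P ω * Ya ω else 0)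
      = ∑ y ∈ Finset.image Ya Finset.univ, y * pr P (fun ω => Ya ω = y ∧ E ω) := by
  simp only [pr, Finset.mul_sum]
  rw [Finset.sum_comm]
  refine Finset.sum_congr rfl fun ω _ => ?_
  rw [Finset.sum_eq_single_of_mem (Ya ω) (Finset.mem_image_of_mem Ya (Finset.mem_univ ω))]
  · by_cases hE : E ω <;> simp [hE, mul_comm]
  · intro y _ hy
    simp [Ne.symm hy]

/-- Conditional independence of the potential outcome and the source
indicator given the full covariates gives the standardization identity. -/
theorem transport_full_covariates
    {𝒳 𝒲 : Type*} [Fintype Ω] [Fintype 𝒳] [Fintype 𝒲]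
    (P : Ω → ℝ) (hP0 : ∀ ω, 0 ≤ P ω) (hP1 : ∑ ω, P ω = 1)
    (X : Ω → 𝒳) (W : Ω → 𝒲) (Ya : Ω → ℝ) (R : Ω → Bool)
    -- conditional independence of Ya and R given (X, W)
    (hCI : ∀ x w (r : Bool) (y : ℝ), 0 < pr P (fun ω => X ω = x ∧ W ω = w) →
      cpr P (fun ω => Ya ω = y ∧ R ω = r) (fun ω => X ω = x ∧ W ω = w)
        = cpr P (fun ω => Ya ω = y) (fun ω => X ω = x ∧ W ω = w)
          * cpr P (fun ω => R ω = r) (fun ω => X ω = x ∧ W ω = w))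
    -- positivity
    (hposT : 0 < pr P (fun ω => R ω = false))
    (hpos : ∀ x w, 0 < pr P (fun ω => X ω = x ∧ W ω = w ∧ R ω = false) →
      0 < pr P (fun ω => X ω = x ∧ W ω = w ∧ R ω = true)) :
    cex P Ya (fun ω => R ω = false)
      = ∑ xw ∈ Finset.univ.filter
            (fun xw : 𝒳 × 𝒲 =>
              0 < pr P (fun ω => X ω = xw.1 ∧ W ω = xw.2 ∧ R ω = false)),
          cpr P (fun ω => X ω = xw.1 ∧ W ω = xw.2) (fun ω => R ω = false)
            * cex P Ya (fun ω => X ω = xw.1 ∧ W ω = xw.2 ∧ R ω = true) := by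
  classical
  set prF := pr P (fun ω => R ω = false) with hprF
  -- numerator of a conditional expectation on a stratum
  set N : 𝒳 × 𝒲 → Bool → ℝ := fun xw r =>
    ∑ ω, @ite ℝ (X ω = xw.1 ∧ W ω = xw.2 ∧ R ω = r) (Classical.propDecidable _)
      (P ω * Ya ω) 0 with hN
  -- split the global numerator over strata
  have hsplit : (∑ ω, if R ω = false then P ω * Ya ω else 0)
      = ∑ xw : 𝒳 × 𝒲, N xw false := by
    rw [hN, Finset.sum_comm]
    refine Finset.sum_congr rfl fun ω _ => ?_
    rw [Finset.sum_eq_single (X ω, W ω)]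
    · simp
    · intro b _ hb
      have : ¬(X ω = b.1 ∧ W ω = b.2 ∧ R ω = false) := by
        rintro ⟨h1, h2, _⟩
        exact hb (Prod.ext_iff.mpr ⟨h1.symm, h2.symm⟩)
      simp [this]
    · simp
  -- strata with zero target-probability contribute nothing
  have hvanish : ∀ xw : 𝒳 × 𝒲,
      ¬(0 < pr P (fun ω => X ω = xw.1 ∧ W ω = xw.2 ∧ R ω = false)) → N xw false = 0 := by
    intro xw hxw
    have hz : pr P (fun ω => X ω = xw.1 ∧ W ω = xw.2 ∧ R ω = false) = 0 :=
      le_antisymm (not_lt.mp hxw) (pr_nonneg P hP0 _)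
    refine Finset.sum_eq_zero fun ω _ => ?_
    by_cases h : X ω = xw.1 ∧ W ω = xw.2 ∧ R ω = false
    · simp [h, pr_zero_imp P hP0 hz ω h]
    · simp [h]
  have hsum : (∑ ω, if R ω = false then P ω * Ya ω else 0)
      = ∑ xw ∈ Finset.univ.filter
          (fun xw : 𝒳 × 𝒲 =>
            0 < pr P (fun ω => X ω = xw.1 ∧ W ω = xw.2 ∧ R ω = false)), N xw false := by
    rw [hsplit]
    exact (Finset.sum_subset (Finset.filter_subset _ _)
      (fun xw _ hxw => hvanish xw (by simpa using hxw))).symm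
  rw [cex]
  rw [Eq.trans (Finset.sum_congr rfl fun ω _ => by split_ifs <;> rfl) hsum,
    Finset.sum_div]
  refine Finset.sum_congr rfl fun xw hxw => ?_
  obtain ⟨x, w⟩ := xw
  simp only [Finset.mem_filter, Finset.mem_univ, true_and] at hxw
  -- notation for the stratum probabilities
  set pf := pr P (fun ω => X ω = x ∧ W ω = w ∧ R ω = false) with hpf
  set pt := pr P (fun ω => X ω = x ∧ W ω = w ∧ R ω = true) with hpt
  set pw := pr P (fun ω => X ω = x ∧ W ω = w) with hpw
  have hptpos : 0 < pt := hpos x w hxw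
  have hpwpos : 0 < pw := lt_of_lt_of_le hxw (pr_mono P hP0 fun ω h => ⟨h.1, h.2.1⟩)
  -- conditional independence in product form
  have hCI' : ∀ (r : Bool) (y : ℝ),
      pr P (fun ω => Ya ω = y ∧ X ω = x ∧ W ω = w ∧ R ω = r) * pw
        = pr P (fun ω => Ya ω = y ∧ X ω = x ∧ W ω = w)
          * pr P (fun ω => X ω = x ∧ W ω = w ∧ R ω = r) := by
    intro r y
    have h := hCI x w r y hpwpos
    simp only [cpr] at h
    rw [pr_congr P (E := fun ω => (Ya ω = y ∧ R ω = r) ∧ X ω = x ∧ W ω = w)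
        (F := fun ω => Ya ω = y ∧ X ω = x ∧ W ω = w ∧ R ω = r) (fun ω => by tauto),
      pr_congr P (E := fun ω => R ω = r ∧ X ω = x ∧ W ω = w)
        (F := fun ω => X ω = x ∧ W ω = w ∧ R ω = r) (fun ω => by tauto)] at h
    field_simp at h
    rw [← hpw] at h
    rw [div_eq_div_iff (ne_of_gt hpwpos) (pow_ne_zero 2 (ne_of_gt hpwpos))] at h
    exact mul_right_cancel₀ (ne_of_gt hpwpos) (by linear_combination h)
  -- express stratum numerators via the outcome values
  set M := ∑ y ∈ Finset.image Ya Finset.univ,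
      y * pr P (fun ω => Ya ω = y ∧ X ω = x ∧ W ω = w) with hM
  have hNr : ∀ r : Bool, N (x, w) r * pw
      = M * pr P (fun ω => X ω = x ∧ W ω = w ∧ R ω = r) := by
    intro r
    have h1 : N (x, w) r = ∑ y ∈ Finset.image Ya Finset.univ,
        y * pr P (fun ω => Ya ω = y ∧ X ω = x ∧ W ω = w ∧ R ω = r) :=
      num_eq P Ya (fun ω => X ω = x ∧ W ω = w ∧ R ω = r)
    rw [h1, Finset.sum_mul, hM, Finset.sum_mul]
    refine Finset.sum_congr rfl fun y _ => ?_
    rw [mul_assoc, mul_assoc, hCI' r y]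
  have hNf := hNr false
  have hNt := hNr true
  rw [← hpf] at hNf
  rw [← hpt] at hNt
  -- key cross identity
  have hkey : N (x, w) false * pt = N (x, w) true * pf := by
    have : N (x, w) false * pt * pw = N (x, w) true * pf * pw := by
      calc N (x, w) false * pt * pw = (N (x, w) false * pw) * pt := by ring
        _ = (M * pf) * pt := by rw [hNf]
        _ = (M * pt) * pf := by ring
        _ = (N (x, w) true * pw) * pf := by rw [hNt]
        _ = N (x, w) true * pf * pw := by ring
    exact mul_right_cancel₀ (ne_of_gt hpwpos) this
  -- finish
  simp only [cpr, cex]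
  rw [pr_congr P (E := fun ω => (X ω = x ∧ W ω = w) ∧ R ω = false)
      (F := fun ω => X ω = x ∧ W ω = w ∧ R ω = false) (fun ω => by tauto), ← hpf, ← hprF,
    ← hpt]
  show N (x, w) false / prF = pf / prF * (N (x, w) true / pt)
  rw [div_mul_div_comm, div_eq_div_iff (ne_of_gt hposT) (by positivity)]
  linear_combination prF * hkey
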